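/- Let (A, c_A), (X, c_X), (Y, c_Y) be topological spaces, i : A ↪ X a closed inclusion, and f : (A, c_A) → (Y, c_Y) a map of closure spaces. Suppose (a) the closure-space pushout (Z, c_Z) of f along i is a topological space (c_Z idempotent), and (b) for every closed set C ⊆ A there exists B ⊆ X \ A with (c_X B) ∩ A = C. Then f is a closed map. -/

import Mathlib

open Classical in
/-- The map `g : X → Z = Y ⊔ (X \ A)` of the pushout of `f : A → Y` along `A ↪ X`:
`g = f` on `A` and the identity on `X \ A`. -/
noncomputable def pushoutMap {X Y : Type*} (A : Set X) (f : X → Y) (x : X) :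
    Y ⊕ {x : X // x ∉ A} :=
  if h : x ∈ A then Sum.inl (f x) else Sum.inr ⟨x, h⟩

/-- The closure operator of the pushout `Z = Y ⊔ (X \ A)`:
`c_Z B = c_Y (B ∩ Y) ∪ g (c_X (B ∩ (X \ A)))`. -/
noncomputable def pushoutClosure {X Y : Type*} (A : Set X) (f : X → Y)
    (cX : Set X → Set X) (cY : Set Y → Set Y)
    (B : Set (Y ⊕ {x : X // x ∉ A})) : Set (Y ⊕ {x : X // x ∉ A}) :=
  Sum.inl '' cY (Sum.inl ⁻¹' B) ∪
    pushoutMap A f '' cX (Subtype.val '' (Sum.inr ⁻¹' B))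

/-- Theorem 4.1(2): if the closure-space pushout of `f : (A, c_A) → (Y, c_Y)` along a
closed inclusion `A ↪ (X, c_X)` of topological spaces is a topological space, and every
closed `C ⊆ A` is of the form `(c_X B) ∩ A` for some `B ⊆ X \ A`, then `f` is closed. -/
theorem pushout_topological_implies_closed {X Y : Type*}
    (cX : Set X → Set X) (cY : Set Y → Set Y)
    (hXempty : cX ∅ = ∅) (hXext : ∀ B : Set X, B ⊆ cX B)
    (hXunion : ∀ B B' : Set X, cX (B ∪ B') = cX B ∪ cX B')
    (hXidem : ∀ B : Set X, cX (cX B) = cX B)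
    (hYempty : cY ∅ = ∅) (hYext : ∀ B : Set Y, B ⊆ cY B)
    (hYunion : ∀ B B' : Set Y, cY (B ∪ B') = cY B ∪ cY B')
    (hYidem : ∀ B : Set Y, cY (cY B) = cY B)
    (A : Set X) (hA : cX A = A) (f : X → Y)
    (hf : ∀ B : Set X, B ⊆ A → f '' (cX B ∩ A) ⊆ cY (f '' B))
    (hidem : ∀ B : Set (Y ⊕ {x : X // x ∉ A}),
      pushoutClosure A f cX cY (pushoutClosure A f cX cY B) = pushoutClosure A f cX cY B)
    (hcond : ∀ C : Set X, C ⊆ A → cX C ∩ A = C → ∃ B : Set X, B ⊆ Aᶜ ∧ cX B ∩ A = C) :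
    ∀ C : Set X, C ⊆ A → cX C ∩ A = C → cY (f '' C) = f '' C := by
  intro C hCA hCcl
  obtain ⟨B, hBA, hB⟩ := hcond C hCA hCcl
  set g := pushoutMap A f with hg
  have hpre1 : Sum.inl ⁻¹' (g '' B) = (∅ : Set Y) := by
    ext y
    simp only [Set.mem_preimage, Set.mem_image, Set.mem_empty_iff_false, iff_false, not_exists]
    rintro x ⟨hx, hgx⟩
    have hxA : x ∉ A := hBA hx
    simp [hg, pushoutMap, hxA] at hgx
  have hpre2 : Subtype.val '' (Sum.inr ⁻¹' (g '' B)) = B := by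
    ext x
    constructor
    · rintro ⟨⟨x', hx'⟩, ⟨b, hb, hgb⟩, rfl⟩
      have hbA : b ∉ A := hBA hb
      simp only [hg, pushoutMap, dif_neg hbA, Sum.inr.injEq, Subtype.mk.injEq] at hgb
      exact hgb ▸ hb
    · intro hx
      have hxA : x ∉ A := hBA hx
      exact ⟨⟨x, hxA⟩, ⟨x, hx, by simp [hg, pushoutMap, hxA]⟩, rfl⟩
  have h1 : pushoutClosure A f cX cY (g '' B) = g '' cX B := by
    unfold pushoutClosure
    rw [hpre1, hpre2, hYempty]
    simp
    rfl
  have hT : pushoutClosure A f cX cY (g '' cX B) = g '' cX B := by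
    have := hidem (g '' B)
    rwa [h1] at this
  have hpre3 : Sum.inl ⁻¹' (g '' cX B) = f '' C := by
    ext y
    constructor
    · rintro ⟨x, hx, hgx⟩
      by_cases hxA : x ∈ A
      · simp only [hg, pushoutMap, dif_pos hxA, Sum.inl.injEq] at hgx
        exact ⟨x, hB ▸ ⟨hx, hxA⟩, hgx⟩
      · simp [hg, pushoutMap, hxA] at hgx
    · rintro ⟨x, hx, rfl⟩
      have hx' : x ∈ cX B ∩ A := hB ▸ hx
      exact ⟨x, hx'.1, by simp [hg, pushoutMap, hx'.2]⟩
  apply Set.Subset.antisymm _ (hYext _)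
  intro y hy
  have : Sum.inl y ∈ pushoutClosure A f cX cY (g '' cX B) := by
    left
    exact ⟨y, by rwa [hpre3], rfl⟩
  rw [hT] at this
  rw [← hpre3]
  exact this
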